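/- Let λ₁, λ₂, λ₃ be nonzero complex numbers, σ ∈ ℂ, A = [[−σ, 1, 1],[0, σ, 0],[0, 0, σ]] and B = diag(λ₁, λ₂, λ₃), and suppose A² = I and (AB)³ = I. Then λ₁, λ₂, λ₃ are sixth roots of unity with λ₁ ≠ λ₂ and λ₁ ≠ λ₃; if λ₂ ≠ λ₃ then the pair (A, B) is indecomposable, while if λ₂ = λ₃ then (A, B) is decomposable. -/

import Mathlib

noncomputable section
open Matrix

/-- `e(r) = exp(2πir)`. -/
def ee (r : ℝ) : ℂ := Complex.exp (2 * Real.pi * Complex.I * r)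

/-- A subspace `W` is invariant under the matrix `M` (acting by `mulVec`). -/
def Invariant {n : ℕ} (M : Matrix (Fin n) (Fin n) ℂ) (W : Submodule ℂ (Fin n → ℂ)) : Prop :=
  ∀ v ∈ W, M.mulVec v ∈ W

/-- The pair `(A, B)` is decomposable: `ℂⁿ` is the direct sum of two nonzero subspaces,
each invariant under both `A` and `B`. -/
def Decomposable {n : ℕ} (A B : Matrix (Fin n) (Fin n) ℂ) : Prop :=
  ∃ U V : Submodule ℂ (Fin n → ℂ), U ≠ ⊥ ∧ V ≠ ⊥ ∧ IsCompl U V ∧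
    Invariant A U ∧ Invariant B U ∧ Invariant A V ∧ Invariant B V

/-- The pair `(A, B)` is indecomposable. -/
def Indecomposable {n : ℕ} (A B : Matrix (Fin n) (Fin n) ℂ) : Prop :=
  ¬ Decomposable A B

/-- `(A, B)` and `(A', B')` are simultaneously conjugate:
`P A P⁻¹ = A'` and `P B P⁻¹ = B'` for a single invertible `P`. -/
def SimConj {n : ℕ} (A B A' B' : Matrix (Fin n) (Fin n) ℂ) : Prop :=
  ∃ P : Matrix (Fin n) (Fin n) ℂ, IsUnit P ∧ P * A = A' * P ∧ P * B = B' * P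

/-- `M` is diagonalizable over `ℂ`. -/
def IsDiagonalizable {n : ℕ} (M : Matrix (Fin n) (Fin n) ℂ) : Prop :=
  ∃ P : Matrix (Fin n) (Fin n) ℂ, IsUnit P ∧ ∃ d : Fin n → ℂ, P * M = Matrix.diagonal d * P

/-- with `A = [[−σ,1,1],[0,σ,0],[0,0,σ]]`, `B = diag(λ₁,λ₂,λ₃)` (λᵢ ≠ 0),
if `A² = I` and `(AB)³ = I` then the `λᵢ` are sixth roots of unity with `λ₁ ≠ λ₂`,
`λ₁ ≠ λ₃`; the pair `(A, B)` is indecomposable if `λ₂ ≠ λ₃` and decomposable if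
`λ₂ = λ₃`. -/
theorem stmt_5 (l1 l2 l3 σ : ℂ) (hl1 : l1 ≠ 0) (hl2 : l2 ≠ 0) (hl3 : l3 ≠ 0)
    (A : Matrix (Fin 3) (Fin 3) ℂ) (hA : A = !![-σ, 1, 1; 0, σ, 0; 0, 0, σ])
    (B : Matrix (Fin 3) (Fin 3) ℂ) (hB : B = Matrix.diagonal ![l1, l2, l3])
    (hA2 : A ^ 2 = 1) (hAB3 : (A * B) ^ 3 = 1) :
    l1 ^ 6 = 1 ∧ l2 ^ 6 = 1 ∧ l3 ^ 6 = 1 ∧ l1 ≠ l2 ∧ l1 ≠ l3 ∧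
      (l2 ≠ l3 → Indecomposable A B) ∧ (l2 = l3 → Decomposable A B) := by
  rw [hA, pow_two] at hA2
  have hσ : σ * σ = 1 := by
    have := congrFun (congrFun hA2 1) 1
    simpa [Matrix.mul_apply, Fin.sum_univ_three, Matrix.vecHead, Matrix.vecTail] using this
  have hC : A * B = !![-(σ*l1), l2, l3; 0, σ*l2, 0; 0, 0, σ*l3] := by
    rw [hA, hB]
    ext i j
    fin_cases i <;> fin_cases j <;>
      simp [Matrix.mul_apply, Matrix.diagonal, Fin.sum_univ_three, Matrix.vecHead,
        Matrix.vecTail] <;> ring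
  rw [hC, pow_succ, pow_succ, pow_one] at hAB3
  have h00 : (-(σ*l1)) * (-(σ*l1)) * (-(σ*l1)) = 1 := by
    have := congrFun (congrFun hAB3 0) 0
    simpa [Matrix.mul_apply, Fin.sum_univ_three, Matrix.vecHead, Matrix.vecTail] using this
  have h11 : (σ*l2) * (σ*l2) * (σ*l2) = 1 := by
    have := congrFun (congrFun hAB3 1) 1
    simpa [Matrix.mul_apply, Fin.sum_univ_three, Matrix.vecHead, Matrix.vecTail] using this
  have h22 : (σ*l3) * (σ*l3) * (σ*l3) = 1 := by
    have := congrFun (congrFun hAB3 2) 2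
    simpa [Matrix.mul_apply, Fin.sum_univ_three, Matrix.vecHead, Matrix.vecTail] using this
  have h01 : (-(σ*l1))*(-(σ*l1))*l2 + ((-(σ*l1))*l2 + l2*(σ*l2))*(σ*l2) = 0 := by
    have := congrFun (congrFun hAB3 0) 1
    simpa [Matrix.mul_apply, Fin.sum_univ_three, Matrix.vecHead, Matrix.vecTail] using this
  have h02 : (-(σ*l1))*(-(σ*l1))*l3 + ((-(σ*l1))*l3 + l3*(σ*l3))*(σ*l3) = 0 := by
    have := congrFun (congrFun hAB3 0) 2
    simpa [Matrix.mul_apply, Fin.sum_univ_three, Matrix.vecHead, Matrix.vecTail] using this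
  have hl16 : l1 ^ 6 = 1 := by
    have e1 : σ^3 * l1^3 = -1 := by linear_combination -h00
    linear_combination (σ^3*l1^3 - 1) * e1 - l1^6*(σ^4+σ^2+1) * hσ
  have hl26 : l2 ^ 6 = 1 := by
    have e2 : σ^3 * l2^3 = 1 := by linear_combination h11
    linear_combination (σ^3*l2^3 + 1) * e2 - l2^6*(σ^4+σ^2+1) * hσ
  have hl36 : l3 ^ 6 = 1 := by
    have e3 : σ^3 * l3^3 = 1 := by linear_combination h22
    linear_combination (σ^3*l3^3 + 1) * e3 - l3^6*(σ^4+σ^2+1) * hσ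
  have hne12 : l1 ≠ l2 := by
    intro h
    apply hl2
    have h3 : l2 ^ 3 = 0 := by
      rw [h] at h01
      linear_combination h01 - l2^3 * hσ
    exact pow_eq_zero_iff (by norm_num) |>.mp h3
  have hne13 : l1 ≠ l3 := by
    intro h
    apply hl3
    have h3 : l3 ^ 3 = 0 := by
      rw [h] at h02
      linear_combination h02 - l3^3 * hσ
    exact pow_eq_zero_iff (by norm_num) |>.mp h3
  refine ⟨hl16, hl26, hl36, hne12, hne13, ?_, ?_⟩
  · -- Indecomposable
    intro hne23
    rintro ⟨U, V, hU, hV, hc, hAU, hBU, hAV, hBV⟩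
    obtain ⟨f, hfU, hfV, hfmemU, hfmemV⟩ :
        ∃ f : (Fin 3 → ℂ) →ₗ[ℂ] (Fin 3 → ℂ), (∀ u ∈ U, f u = u) ∧ (∀ v ∈ V, f v = 0) ∧
          (∀ w, f w ∈ U) ∧ (∀ w, w - f w ∈ V) := by
      refine ⟨U.subtype ∘ₗ (U.projectionOnto V hc), ?_, ?_, ?_, ?_⟩
      · intro u hu
        have := Submodule.projectionOnto_apply_left hc ⟨u, hu⟩
        exact congrArg (Subtype.val) this
      · intro v hv
        have := Submodule.projectionOnto_apply_of_mem_right hc hv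
        simp [this]
      · intro w
        exact (U.projectionOnto V hc w).2
      · intro w
        apply (Submodule.projectionOnto_apply_eq_zero_iff hc).mp
        have : U.projectionOnto V hc ((U.subtype ∘ₗ (U.projectionOnto V hc)) w)
            = U.projectionOnto V hc w := by
          have := Submodule.projectionOnto_apply_left hc (U.projectionOnto V hc w)
          exact this
        rw [map_sub, this, sub_self]
    have hcomm : ∀ (N : Matrix (Fin 3) (Fin 3) ℂ), Invariant N U → Invariant N V →
        ∀ w, f (N.mulVec w) = N.mulVec (f w) := by
      intro N hNU hNV w
      have hw : N.mulVec w = N.mulVec (f w) + N.mulVec (w - f w) := by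
        rw [← Matrix.mulVec_add]
        congr 1
        ring
      rw [hw, map_add, hfU _ (hNU _ (hfmemU w)), hfV _ (hNV _ (hfmemV w)), add_zero]
    obtain ⟨M, hM⟩ : ∃ M : Matrix (Fin 3) (Fin 3) ℂ, ∀ w, M.mulVec w = f w :=
      ⟨LinearMap.toMatrix' f, fun w => by rw [← Matrix.toLin'_apply, Matrix.toLin'_toMatrix']⟩
    have hBc : ∀ w, M.mulVec (B.mulVec w) = B.mulVec (M.mulVec w) := by
      intro w; rw [hM, hM, hcomm B hBU hBV]
    have hAc : ∀ w, M.mulVec (A.mulVec w) = A.mulVec (M.mulVec w) := by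
      intro w; rw [hM, hM, hcomm A hAU hAV]
    -- off-diagonal entries of M vanish
    have offd : ∀ i j : Fin 3, (![l1,l2,l3] i) ≠ (![l1,l2,l3] j) → M i j = 0 := by
      intro i j hij
      have h := congrFun (hBc (Pi.single j 1)) i
      rw [hB, Matrix.diagonal_mulVec_single, Matrix.mulVec_single,
        Matrix.mulVec_diagonal, Matrix.mulVec_single] at h
      simp only [mul_one, Pi.smul_apply, op_smul_eq_mul, Matrix.col_apply] at h
      have h2 : M i j * (![l1,l2,l3] j - ![l1,l2,l3] i) = 0 := by ring_nf; linear_combination h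
      rcases mul_eq_zero.mp h2 with h3 | h3
      · exact h3
      · exact absurd (sub_eq_zero.mp h3).symm hij
    -- diagonal entries of M agree
    have hd01 : M 0 0 = M 1 1 := by
      have h := congrFun (hAc (Pi.single 1 1)) 0
      rw [hA] at h
      simp only [Matrix.mulVec_single, mul_one] at h
      simp [Matrix.mulVec, dotProduct, Fin.sum_univ_three, Matrix.vecHead,
        Matrix.vecTail, offd 0 1 hne12, offd 0 2 hne13, offd 2 1 (Ne.symm hne23)] at h
      linear_combination h
    have hd02 : M 0 0 = M 2 2 := by
      have h := congrFun (hAc (Pi.single 2 1)) 0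
      rw [hA] at h
      simp only [Matrix.mulVec_single, mul_one] at h
      simp [Matrix.mulVec, dotProduct, Fin.sum_univ_three, Matrix.vecHead,
        Matrix.vecTail, offd 0 1 hne12, offd 0 2 hne13, offd 1 2 hne23] at h
      linear_combination h
    -- hence M is scalar
    have hMs : M = (M 0 0) • (1 : Matrix (Fin 3) (Fin 3) ℂ) := by
      ext i j
      fin_cases i <;> fin_cases j <;>
        simp [Matrix.one_apply, offd 0 1 hne12, offd 0 2 hne13, offd 1 2 hne23,
          offd 1 0 (Ne.symm hne12), offd 2 0 (Ne.symm hne13), offd 2 1 (Ne.symm hne23),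
          ← hd01, ← hd02]
    obtain ⟨u, huU, hu0⟩ := Submodule.exists_mem_ne_zero_of_ne_bot hU
    obtain ⟨v, hvV, hv0⟩ := Submodule.exists_mem_ne_zero_of_ne_bot hV
    have hu : (M 0 0) • u = u := by
      calc (M 0 0) • u = ((M 0 0) • (1 : Matrix (Fin 3) (Fin 3) ℂ)) *ᵥ u := by
            rw [Matrix.smul_mulVec, Matrix.one_mulVec]
        _ = M *ᵥ u := by rw [← hMs]
        _ = u := by rw [hM, hfU u huU]
    have hv : (M 0 0) • v = 0 := by
      calc (M 0 0) • v = ((M 0 0) • (1 : Matrix (Fin 3) (Fin 3) ℂ)) *ᵥ v := by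
            rw [Matrix.smul_mulVec, Matrix.one_mulVec]
        _ = M *ᵥ v := by rw [← hMs]
        _ = 0 := by rw [hM, hfV v hvV]
    have hc0 : M 0 0 = 0 := by
      rcases smul_eq_zero.mp hv with h | h
      · exact h
      · exact absurd h hv0
    rw [hc0, zero_smul] at hu
    exact hu0 hu.symm
  · -- Decomposable
    intro h23
    set w : Fin 3 → ℂ := ![0, 1, -1] with hw
    refine ⟨LinearMap.ker (LinearMap.proj (2 : Fin 3)), Submodule.span ℂ {w}, ?_, ?_, ?_, ?_, ?_, ?_, ?_⟩
    · rw [Submodule.ne_bot_iff]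
      refine ⟨Pi.single 0 1, ?_, ?_⟩
      · simp [LinearMap.mem_ker]
      · intro h
        have := congrFun h 0
        simp [Pi.single_apply] at this
    · rw [Submodule.ne_bot_iff]
      refine ⟨w, Submodule.mem_span_singleton_self w, ?_⟩
      intro h
      have := congrFun h 1
      simp [hw] at this
    · constructor
      · rw [Submodule.disjoint_def]
        intro x hxU hxV
        obtain ⟨c, rfl⟩ := Submodule.mem_span_singleton.mp hxV
        have hx2 : (c • w) 2 = 0 := by simpa [LinearMap.mem_ker] using hxU
        have hc : c = 0 := by simpa [hw] using hx2
        simp [hc]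
      · rw [codisjoint_iff, eq_top_iff]
        intro v _
        have hv : v = (v + (v 2) • w) + (-(v 2)) • w := by
          ext i; fin_cases i <;> simp [hw, Matrix.vecHead, Matrix.vecTail, Function.comp] <;> try ring
        rw [hv]
        refine Submodule.add_mem_sup ?_ ?_
        · simp [LinearMap.mem_ker, hw, Matrix.vecHead, Matrix.vecTail, Function.comp]
        · exact Submodule.smul_mem _ _ (Submodule.mem_span_singleton_self w)
    · -- Invariant A U
      intro v hv
      rw [LinearMap.mem_ker] at hv ⊢
      simp at hv ⊢
      rw [hA]
      simp [Matrix.mulVec, dotProduct, Fin.sum_univ_three, Matrix.vecHead, Matrix.vecTail, hv]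
    · -- Invariant B U
      intro v hv
      rw [LinearMap.mem_ker] at hv ⊢
      simp at hv ⊢
      rw [hB]
      simp [Matrix.mulVec, dotProduct, Matrix.diagonal, Fin.sum_univ_three, Matrix.vecHead, Matrix.vecTail, hv]
    · -- Invariant A V
      intro v hv
      obtain ⟨c, rfl⟩ := Submodule.mem_span_singleton.mp hv
      rw [Matrix.mulVec_smul]
      have : A.mulVec w = σ • w := by
        rw [hA]; ext i
        fin_cases i <;> simp [Matrix.mulVec, dotProduct, Fin.sum_univ_three, hw,
          Matrix.vecHead, Matrix.vecTail] <;> ring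
      rw [this]
      exact Submodule.smul_mem _ _ (Submodule.smul_mem _ _ (Submodule.mem_span_singleton_self w))
    · -- Invariant B V
      intro v hv
      obtain ⟨c, rfl⟩ := Submodule.mem_span_singleton.mp hv
      rw [Matrix.mulVec_smul]
      have : B.mulVec w = l2 • w := by
        rw [hB]; ext i
        fin_cases i <;> simp [Matrix.mulVec, dotProduct, Matrix.diagonal, Fin.sum_univ_three,
          hw, Matrix.vecHead, Matrix.vecTail, h23] <;> ring
      rw [this]
      exact Submodule.smul_mem _ _ (Submodule.smul_mem _ _ (Submodule.mem_span_singleton_self w))
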